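/- Let G be a finite simple graph with vertex set V and h : V → ℝ an injective height function. Let u and v be adjacent vertices with h(v) < h(u); suppose v is a minimum, u is a simple saddle (its lower link and its upper link each have exactly two connected components), the subgraph induced on the neighbourhood of u is a cycle, the subgraph induced on the neighbourhood of v is a cycle on at least 3 vertices, and no vertex separates u and v. Then for the swapped height function h': the lower link of u with respect to h' equals lowerlink_h(u) \ {v} and is nonempty and connected; the upper link of u with respect to h' equals upperlink_h(u) ∪ {v} and is nonempty and connected; the lower link of v with respect to h' is {u} and the upper link of v with respect to h' is connected and nonempty. Hence both u and v are regular vertices with respect to h'. -/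

import Mathlib

open SimpleGraph



lemma induce_connected_of_subsingleton {V : Type*} (G : SimpleGraph V) (S : Set V)
    (hne : S.Nonempty) (hss : ∀ x ∈ S, ∀ y ∈ S, x = y) : (G.induce S).Connected := by
  rw [SimpleGraph.connected_iff]
  refine ⟨fun x y => ?_, ⟨⟨hne.choose, hne.choose_spec⟩⟩⟩
  have : x = y := Subtype.ext (hss _ x.2 _ y.2)
  exact this ▸ Reachable.refl x

def induceInduceIso {V W : Type*} (G : SimpleGraph V) (C : SimpleGraph W) (A T : Set V)
    (hTA : T ⊆ A) (e : G.induce A ≃g C) :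
    G.induce T ≃g C.induce {z | (e.symm z : V) ∈ T} where
  toFun x := ⟨e ⟨x.1, hTA x.2⟩, by simp [x.2]⟩
  invFun z := ⟨(e.symm z.1 : V), z.2⟩
  left_inv x := by simp
  right_inv z := by simp
  map_rel_iff' := by
    intro x y
    simp only [Equiv.coe_fn_mk, comap_adj, Function.Embedding.coe_subtype]
    have := e.map_rel_iff (a := ⟨x.1, hTA x.2⟩) (b := ⟨y.1, hTA y.2⟩)
    rw [this]
    rfl


-- pigeonhole in a type of Nat.card 2
lemma eq_of_card_two {α : Type*} (h2 : Nat.card α = 2) (c1 c2 c3 : α)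
    (h13 : c1 ≠ c3) (h23 : c2 ≠ c3) : c1 = c2 := by
  obtain ⟨a, b, hab, huniv⟩ := Nat.card_eq_two_iff.mp h2
  have hmem : ∀ c : α, c = a ∨ c = b := by
    intro c
    have : c ∈ ({a, b} : Set α) := huniv ▸ Set.mem_univ c
    simpa using this
  rcases hmem c1 with h1 | h1 <;> rcases hmem c2 with h2' | h2' <;>
    rcases hmem c3 with h3 | h3 <;> subst_vars <;> simp_all

lemma connected_diff_isolated {V : Type*} {G : SimpleGraph V} {S : Set V} {v : V}
    (hv : v ∈ S) (hiso : ∀ z ∈ S, ¬ G.Adj v z)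
    (hcard : Nat.card (G.induce S).ConnectedComponent = 2) :
    (S \ {v}).Nonempty ∧ (G.induce (S \ {v})).Connected := by
  classical
  -- nonempty
  have hne : (S \ {v}).Nonempty := by
    by_contra hempty
    rw [Set.not_nonempty_iff_eq_empty, Set.diff_eq_empty] at hempty
    have hSv : S = {v} := Set.Subset.antisymm hempty (by simpa using hv)
    have hsub : Subsingleton ↥S := by
      constructor
      rintro ⟨x, hx⟩ ⟨y, hy⟩
      rw [hSv] at hx hy
      simp_all
    have : Subsingleton (G.induce S).ConnectedComponent := by
      constructor
      intro c1 c2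
      obtain ⟨x, rfl⟩ := c1.exists_rep
      obtain ⟨y, rfl⟩ := c2.exists_rep
      congr 1
      exact Subsingleton.elim x y
    have : Nat.card (G.induce S).ConnectedComponent = 1 := by
      have : Nonempty (G.induce S).ConnectedComponent := ⟨(G.induce S).connectedComponentMk ⟨v, hv⟩⟩
      exact Nat.card_unique
    omega
  refine ⟨hne, ?_⟩
  rw [SimpleGraph.connected_iff]
  refine ⟨?_, ⟨⟨hne.choose, hne.choose_spec⟩⟩⟩
  -- no reachability from v to anything else in induce S
  have hvnr : ∀ x : ↥S, (x : V) ≠ v → ¬ (G.induce S).Reachable ⟨v, hv⟩ x := by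
    intro x hx hr
    obtain ⟨w⟩ := hr
    cases w with
    | nil => exact hx rfl
    | cons h p => exact hiso _ (Subtype.mem _) h
  -- transfer walks avoiding v
  have htrans : ∀ {x y : ↥S}, (G.induce S).Walk x y → ∀ (hx : (x : V) ≠ v) (hy : (y : V) ≠ v),
      (G.induce (S \ {v})).Reachable ⟨x, ⟨x.2, hx⟩⟩ ⟨y, ⟨y.2, hy⟩⟩ := by
    intro x y w
    induction w with
    | nil => intro hx hy; rfl
    | @cons x' z y' h p ih =>
        intro hx hy
        have hz : (z : V) ≠ v := by
          intro hzv
          have hG : G.Adj (x' : V) (z : V) := h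
          rw [hzv] at hG
          exact hiso _ (Subtype.mem x') hG.symm
        exact (Adj.reachable (by exact h : (G.induce (S \ {v})).Adj ⟨x', ⟨x'.2, hx⟩⟩ ⟨z, ⟨z.2, hz⟩⟩)).trans (ih hz hy)
  intro x y
  -- same component in induce S
  have hxv : (x : V) ≠ v := x.2.2
  have hyv : (y : V) ≠ v := y.2.2
  have hxS : (x : V) ∈ S := x.2.1
  have hyS : (y : V) ∈ S := y.2.1
  have hcomp : (G.induce S).connectedComponentMk ⟨x, hxS⟩ =
      (G.induce S).connectedComponentMk ⟨y, hyS⟩ := by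
    apply eq_of_card_two hcard _ _ ((G.induce S).connectedComponentMk ⟨v, hv⟩)
    · intro hc
      exact hvnr ⟨x, hxS⟩ hxv (SimpleGraph.ConnectedComponent.eq.mp hc).symm
    · intro hc
      exact hvnr ⟨y, hyS⟩ hyv (SimpleGraph.ConnectedComponent.eq.mp hc).symm
  have hr : (G.induce S).Reachable ⟨x, hxS⟩ ⟨y, hyS⟩ := SimpleGraph.ConnectedComponent.eq.mp hcomp
  obtain ⟨w⟩ := hr
  have := htrans w hxv hyv
  convert this <;> exact Subtype.ext rfl


open Fin.CommRing in
lemma cycle_compl_connected {n : ℕ} (S : Set (Fin (n+3)))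
    (hS : ((cycleGraph (n+3)).induce S).Connected) (hS' : Sᶜ.Nonempty) :
    ((cycleGraph (n+3)).induce Sᶜ).Connected := by
  classical
  obtain ⟨s0⟩ := hS.nonempty
  -- a boundary vertex: a ∈ S with a - 1 ∉ S
  have hbd : ∃ a, a ∈ S ∧ a - 1 ∉ S := by
    by_contra hcon
    push_neg at hcon
    have hall : ∀ k : ℕ, ((s0 : Fin (n+3)) - (k : Fin (n+3))) ∈ S := by
      intro k
      induction k with
      | zero => simpa using s0.2
      | succ k ih =>
          have h1 : ((k+1 : ℕ) : Fin (n+3)) = (k : Fin (n+3)) + 1 := by push_cast; ring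
          have := hcon _ ih
          rw [h1, ← sub_sub]
          exact this
    obtain ⟨x, hx⟩ := hS'
    apply hx
    have : (s0 : Fin (n+3)) - ((((s0 : Fin (n+3)) - x).val : ℕ) : Fin (n+3)) = x := by
      rw [Fin.cast_val_eq_self]
      ring
    rw [← this]
    exact hall _
  obtain ⟨a, ha, ha'⟩ := hbd
  have hneg1 : ((n+2 : ℕ) : Fin (n+3)) = -1 := by
    have h0 : ((n+3 : ℕ) : Fin (n+3)) = 0 := by
      exact_mod_cast Fin.natCast_self (n+3)
    have : ((n+2 : ℕ) : Fin (n+3)) + 1 = 0 := by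
      rw [← h0]; push_cast; ring
    linear_combination this
  have hex : ∃ k : ℕ, a + (k : Fin (n+3)) ∉ S := by
    refine ⟨n+2, ?_⟩
    rw [hneg1]
    simpa [sub_eq_add_neg] using ha'
  set m := Nat.find hex with hm
  have hmnot : a + (m : Fin (n+3)) ∉ S := Nat.find_spec hex
  have hmS : ∀ i, i < m → a + (i : Fin (n+3)) ∈ S := by
    intro i hi
    have := Nat.find_min hex hi
    simpa using this
  have hm1 : 1 ≤ m := by
    rcases Nat.eq_zero_or_pos m with h | h
    · exfalso; apply hmnot; rw [h]; simpa using ha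
    · exact h
  have hmle : m ≤ n + 2 := by
    apply Nat.find_le
    rw [hneg1]
    simpa [sub_eq_add_neg] using ha'
  -- the walk invariant
  set C := cycleGraph (n+3) with hC
  have hadj : ∀ x y : Fin (n+3), C.Adj x y ↔ x - y = 1 ∨ y - x = 1 := by
    intro x y
    exact cycleGraph_adj (n := n+1)
  set P : ↥S → Prop := fun x => ∃ j, j < n + 3 ∧ (x : Fin (n+3)) = a + (j : Fin (n+3)) ∧
      ∀ k ≤ j, a + (k : Fin (n+3)) ∈ S with hPdef
  have hstep : ∀ {x y : ↥S}, (C.induce S).Adj x y → P x → P y := by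
    rintro x y hxy ⟨j, hj, hxj, hall⟩
    have hadj' : C.Adj (x : Fin (n+3)) (y : Fin (n+3)) := hxy
    rw [hadj] at hadj'
    rcases hadj' with hcase | hcase
    · -- y = x - 1
      have hy : (y : Fin (n+3)) = (x : Fin (n+3)) - 1 := by linear_combination -hcase
      rcases Nat.eq_zero_or_pos j with hj0 | hjpos
      · exfalso
        apply ha'
        have : (y : Fin (n+3)) = a - 1 := by
          rw [hy, hxj, hj0]; push_cast; ring
        rw [← this]; exact y.2
      · obtain ⟨j', rfl⟩ : ∃ j', j = j' + 1 := ⟨j - 1, by omega⟩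
        refine ⟨j', by omega, ?_, fun k hk => hall k (by omega)⟩
        rw [hy, hxj]; push_cast; ring
    · -- y = x + 1
      have hy : (y : Fin (n+3)) = (x : Fin (n+3)) + 1 := by linear_combination hcase
      by_cases hjn : j + 1 < n + 3
      · refine ⟨j + 1, hjn, ?_, ?_⟩
        · rw [hy, hxj]; push_cast; ring
        · intro k hk
          rcases Nat.lt_or_ge k (j+1) with hk' | hk'
          · exact hall k (by omega)
          · have : k = j + 1 := by omega
            subst this
            have : a + ((j+1 : ℕ) : Fin (n+3)) = (y : Fin (n+3)) := by
              rw [hy, hxj]; push_cast; ring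
            rw [this]; exact y.2
      · have hjeq : j + 1 = n + 3 := by omega
        refine ⟨0, by omega, ?_, ?_⟩
        · have h0 : ((j + 1 : ℕ) : Fin (n+3)) = 0 := by
            rw [hjeq]; exact_mod_cast Fin.natCast_self (n+3)
          have : (y : Fin (n+3)) = a + ((j+1 : ℕ) : Fin (n+3)) := by
            rw [hy, hxj]; push_cast; ring
          rw [this, h0]; push_cast; ring
        · intro k hk
          have : k = 0 := by omega
          subst this
          simpa using ha
  have hwalk : ∀ {x y : ↥S}, (C.induce S).Walk x y → P x → P y := by
    intro x y w
    induction w with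
    | nil => exact id
    | cons h p ih => exact fun hx => ih (hstep h hx)
  have key : ∀ x : ↥S, P x := by
    intro x
    have hr : (C.induce S).Reachable ⟨a, ha⟩ x := hS.preconnected _ _
    refine hwalk hr.some ⟨0, by omega, by simp, ?_⟩
    intro k hk
    have : k = 0 := by omega
    subst this
    simpa using ha
  -- characterization of S
  have hiff : ∀ i, i < n + 3 → (a + (i : Fin (n+3)) ∈ S ↔ i < m) := by
    intro i hi
    constructor
    · intro hin
      by_contra hge
      push_neg at hge
      obtain ⟨j, hj, heq, hall⟩ := key ⟨a + (i : Fin (n+3)), hin⟩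
      have hij : (i : Fin (n+3)) = (j : Fin (n+3)) := by
        have := heq
        simp only at this
        linear_combination this
      have : i = j := by
        have h1 : ((i : Fin (n+3))).val = i := by
          rw [Fin.val_natCast]; exact Nat.mod_eq_of_lt hi
        have h2 : ((j : Fin (n+3))).val = j := by
          rw [Fin.val_natCast]; exact Nat.mod_eq_of_lt hj
        rw [← h1, ← h2, hij]
      exact hmnot (hall m (by omega))
    · exact hmS i
  have hmlt : m < n + 3 := by omega
  -- complement characterization
  have hcompl : ∀ x : Fin (n+3), x ∈ Sᶜ ↔ ∃ i, m ≤ i ∧ i < n + 3 ∧ x = a + (i : Fin (n+3)) := by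
    intro x
    constructor
    · intro hx
      refine ⟨((x - a).val), ?_, Fin.is_lt _, ?_⟩
      · by_contra hlt
        push_neg at hlt
        have hxa : a + (((x - a).val : ℕ) : Fin (n+3)) = x := by
          rw [Fin.cast_val_eq_self]; ring
        exact hx (hxa ▸ hmS _ hlt)
      · rw [Fin.cast_val_eq_self]; ring
    · rintro ⟨i, hmi, hin, rfl⟩
      intro hmem
      have := (hiff i hin).mp hmem
      omega
  -- connectivity of the complement
  have hmem0 : a + (m : Fin (n+3)) ∈ Sᶜ := (hcompl _).mpr ⟨m, le_refl m, hmlt, rfl⟩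
  rw [SimpleGraph.connected_iff]
  refine ⟨?_, ⟨⟨hS'.choose, hS'.choose_spec⟩⟩⟩
  have reach : ∀ i (hmi : m ≤ i) (hin : i < n + 3),
      (C.induce Sᶜ).Reachable ⟨a + (m : Fin (n+3)), hmem0⟩
        ⟨a + (i : Fin (n+3)), (hcompl _).mpr ⟨i, hmi, hin, rfl⟩⟩ := by
    intro i hmi
    induction i, hmi using Nat.le_induction with
    | base => intro _; rfl
    | succ i hi ih =>
        intro hin
        have hin' : i < n + 3 := by omega
        refine (ih hin').trans (Adj.reachable ?_)
        show C.Adj (a + (i : Fin (n+3))) (a + ((i+1 : ℕ) : Fin (n+3)))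
        rw [hadj]
        right
        push_cast
        ring
  intro x y
  obtain ⟨i, hmi, hin, hxe⟩ := (hcompl x).mp x.2
  obtain ⟨i', hmi', hin', hye⟩ := (hcompl y).mp y.2
  have hx : x = ⟨a + (i : Fin (n+3)), (hcompl _).mpr ⟨i, hmi, hin, rfl⟩⟩ := Subtype.ext hxe
  have hy : y = ⟨a + (i' : Fin (n+3)), (hcompl _).mpr ⟨i', hmi', hin', rfl⟩⟩ := Subtype.ext hye
  rw [hx, hy]
  exact (reach i hmi hin).symm.trans (reach i' hmi' hin')



/-- The lower link of a vertex `w`: the set of neighbours of `w` strictly below `w`. -/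
def lowerLink {V : Type*} (G : SimpleGraph V) (h : V → ℝ) (w : V) : Set V :=
  {x | G.Adj w x ∧ h x < h w}

/-- The upper link of a vertex `w`: the set of neighbours of `w` strictly above `w`. -/
def upperLink {V : Type*} (G : SimpleGraph V) (h : V → ℝ) (w : V) : Set V :=
  {x | G.Adj w x ∧ h w < h x}

/-- The height function obtained from `h` by swapping the heights of `u` and `v`. -/
def swapH {V : Type*} [DecidableEq V] (h : V → ℝ) (u v : V) : V → ℝ :=
  fun w => if w = v then h u else if w = u then h v else h w

/-- Death event: a minimum `v` adjacent to a simple saddle `u` (links of `u` and `v`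
are cycles, no separating vertex) annihilate when their heights are swapped: both
`u` and `v` become regular vertices. -/
theorem death_event {V : Type*} [Fintype V] [DecidableEq V] (G : SimpleGraph V)
    (h : V → ℝ) (hinj : Function.Injective h) (u v : V)
    (huv : G.Adj u v) (hlt : h v < h u)
    (hmin : ∀ x, G.Adj v x → h v < h x)
    (hsadL : Nat.card (G.induce (lowerLink G h u)).ConnectedComponent = 2)
    (hsadU : Nat.card (G.induce (upperLink G h u)).ConnectedComponent = 2)
    (hcycu : ∃ n, Nonempty ((G.induce (G.neighborSet u)) ≃g SimpleGraph.cycleGraph n))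
    (hcycv : ∃ n, 3 ≤ n ∧
      Nonempty ((G.induce (G.neighborSet v)) ≃g SimpleGraph.cycleGraph n))
    (hsep : ∀ w, w ≠ u → w ≠ v → ¬(h v < h w ∧ h w < h u)) :
    lowerLink G (swapH h u v) u = lowerLink G h u \ {v} ∧
    (lowerLink G (swapH h u v) u).Nonempty ∧
    (G.induce (lowerLink G (swapH h u v) u)).Connected ∧
    upperLink G (swapH h u v) u = upperLink G h u ∪ {v} ∧
    (upperLink G (swapH h u v) u).Nonempty ∧
    (G.induce (upperLink G (swapH h u v) u)).Connected ∧
    lowerLink G (swapH h u v) v = {u} ∧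
    (upperLink G (swapH h u v) v).Nonempty ∧
    (G.induce (upperLink G (swapH h u v) v)).Connected := by
  classical
  have hvu : v ≠ u := fun hvu => absurd (hvu ▸ hlt) (lt_irrefl _)
  have huvne : u ≠ v := hvu.symm
  have hsV : swapH h u v v = h u := by simp [swapH]
  have hsU : swapH h u v u = h v := by simp [swapH, huvne]
  have hsO : ∀ x, x ≠ u → x ≠ v → swapH h u v x = h x := by
    intro x hxu hxv; simp [swapH, hxu, hxv]
  -- neighbours of u other than v are either below h v or above h u
  have hnbu : ∀ x, G.Adj u x → x ≠ v → (h x < h v ∨ h u < h x) := by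
    intro x hx hxv
    have hxu : x ≠ u := (G.ne_of_adj hx).symm
    have := hsep x hxu hxv
    rcases lt_trichotomy (h x) (h v) with hc | hc | hc
    · exact Or.inl hc
    · exact absurd (hinj hc) hxv
    · rcases lt_trichotomy (h x) (h u) with hc' | hc' | hc'
      · exact absurd ⟨hc, hc'⟩ this
      · exact absurd (hinj hc') hxu
      · exact Or.inr hc'
  -- neighbours of v other than u are above h u
  have hnbv : ∀ x, G.Adj v x → x ≠ u → h u < h x := by
    intro x hx hxu
    have hxv : x ≠ v := (G.ne_of_adj hx).symm
    have h1 := hmin x hx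
    have := hsep x hxu hxv
    rcases lt_trichotomy (h x) (h u) with hc | hc | hc
    · exact absurd ⟨h1, hc⟩ this
    · exact absurd (hinj hc) hxu
    · exact hc
  -- conjunct 1
  have eq1 : lowerLink G (swapH h u v) u = lowerLink G h u \ {v} := by
    ext x
    simp only [lowerLink, Set.mem_setOf_eq, Set.mem_diff, Set.mem_singleton_iff, hsU]
    constructor
    · rintro ⟨hadj, hx⟩
      have hxv : x ≠ v := by
        rintro rfl
        rw [hsV] at hx
        exact absurd hx (not_lt_of_gt hlt)
      have hxu : x ≠ u := (G.ne_of_adj hadj).symm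
      rw [hsO x hxu hxv] at hx
      exact ⟨⟨hadj, hx.trans hlt⟩, hxv⟩
    · rintro ⟨⟨hadj, hx⟩, hxv⟩
      have hxu : x ≠ u := (G.ne_of_adj hadj).symm
      rw [hsO x hxu hxv]
      refine ⟨hadj, ?_⟩
      rcases hnbu x hadj hxv with hc | hc
      · exact hc
      · exact absurd hx (not_lt_of_gt hc)
  -- v is in lowerLink of u and is isolated there
  have hvL : v ∈ lowerLink G h u := ⟨huv, hlt⟩
  have hisoL : ∀ z ∈ lowerLink G h u, ¬ G.Adj v z := by
    rintro z ⟨hadj, hz⟩ hvz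
    have hzu : z ≠ u := (G.ne_of_adj hadj).symm
    have hzv : z ≠ v := (G.ne_of_adj hvz).symm
    exact hsep z hzu hzv ⟨hmin z hvz, hz⟩
  obtain ⟨hKne, hKconn⟩ := connected_diff_isolated hvL hisoL hsadL
  -- conjunct 4
  have eq4 : upperLink G (swapH h u v) u = upperLink G h u ∪ {v} := by
    ext x
    simp only [upperLink, Set.mem_setOf_eq, Set.mem_union, Set.mem_singleton_iff, hsU]
    constructor
    · rintro ⟨hadj, hx⟩
      by_cases hxv : x = v
      · exact Or.inr hxv
      · have hxu : x ≠ u := (G.ne_of_adj hadj).symm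
        rw [hsO x hxu hxv] at hx
        rcases hnbu x hadj hxv with hc | hc
        · exact absurd (hx.trans hc) (lt_irrefl _)
        · exact Or.inl ⟨hadj, hc⟩
    · rintro (⟨hadj, hx⟩ | rfl)
      · have hxu : x ≠ u := (G.ne_of_adj hadj).symm
        have hxv : x ≠ v := by
          rintro rfl
          exact absurd (hlt.trans hx) (lt_irrefl _)
        rw [hsO x hxu hxv]
        exact ⟨hadj, hlt.trans hx⟩
      · rw [hsV]
        exact ⟨huv, hlt⟩
  -- conjunct 7
  have eq7 : lowerLink G (swapH h u v) v = {u} := by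
    ext x
    simp only [lowerLink, Set.mem_setOf_eq, Set.mem_singleton_iff, hsV]
    constructor
    · rintro ⟨hadj, hx⟩
      by_contra hxu
      have hxv : x ≠ v := (G.ne_of_adj hadj).symm
      rw [hsO x hxu hxv] at hx
      exact absurd hx (not_lt_of_gt (hnbv x hadj hxu))
    · rintro rfl
      rw [hsU]
      exact ⟨huv.symm, hlt⟩
  -- conjunct 8 prep : upperLink' v = neighborSet v \ {u}
  have eq8 : upperLink G (swapH h u v) v = G.neighborSet v \ {u} := by
    ext x
    simp only [upperLink, Set.mem_setOf_eq, Set.mem_diff, Set.mem_singleton_iff,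
      mem_neighborSet, hsV]
    constructor
    · rintro ⟨hadj, hx⟩
      refine ⟨hadj, ?_⟩
      rintro rfl
      rw [hsU] at hx
      exact absurd hx (not_lt_of_gt hlt)
    · rintro ⟨hadj, hxu⟩
      have hxv : x ≠ v := (G.ne_of_adj hadj).symm
      rw [hsO x hxu hxv]
      exact ⟨hadj, hnbv x hadj hxu⟩
  -- two distinct elements of the upper link of u
  have hUnt : ∃ x1 x2 : ↥(upperLink G h u), x1 ≠ x2 := by
    have hfin : Finite (G.induce (upperLink G h u)).ConnectedComponent :=
      Nat.finite_of_card_ne_zero (by omega)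
    have : Nontrivial (G.induce (upperLink G h u)).ConnectedComponent := by
      rw [← Finite.one_lt_card_iff_nontrivial]; omega
    obtain ⟨c1, c2, hc⟩ := this
    obtain ⟨x1, rfl⟩ := c1.exists_rep
    obtain ⟨x2, rfl⟩ := c2.exists_rep
    exact ⟨x1, x2, fun he => hc (by rw [he])⟩
  -- conjunct 6 : connectivity of the new upper link of u
  obtain ⟨N, ⟨e⟩⟩ := hcycu
  obtain ⟨x1, x2, hx12⟩ := hUnt
  have hx12' : (x1 : V) ≠ (x2 : V) := fun hh => hx12 (Subtype.ext hh)
  have hvx1 : v ≠ (x1 : V) := by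
    rintro rfl
    exact absurd (hlt.trans x1.2.2) (lt_irrefl _)
  have hvx2 : v ≠ (x2 : V) := by
    rintro rfl
    exact absurd (hlt.trans x2.2.2) (lt_irrefl _)
  have hNcard : Nat.card ↥(G.neighborSet u) = N := by
    rw [Nat.card_congr e.toEquiv, Nat.card_eq_fintype_card, Fintype.card_fin]
  have hN3 : 3 ≤ N := by
    rw [← hNcard]
    have hf : Function.Injective
        (![⟨v, huv⟩, ⟨(x1 : V), x1.2.1⟩, ⟨(x2 : V), x2.2.1⟩] : Fin 3 → ↥(G.neighborSet u)) := by
      intro a b hab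
      fin_cases a <;> fin_cases b <;> simp_all [Subtype.ext_iff]
    calc 3 = Nat.card (Fin 3) := by simp
    _ ≤ _ := Nat.card_le_card_of_injective _ hf
  obtain ⟨n', rfl⟩ : ∃ n', N = n' + 3 := ⟨N - 3, by omega⟩
  set K : Set V := lowerLink G h u \ {v} with hKdef
  have hKA : K ⊆ G.neighborSet u := fun x hx => hx.1.1
  set T : Set V := upperLink G h u ∪ {v} with hTdef
  have hTA : T ⊆ G.neighborSet u := by
    rintro x (hx | rfl)
    · exact hx.1
    · exact huv
  have hcompl : ∀ x ∈ G.neighborSet u, (x ∈ T ↔ x ∉ K) := by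
    intro x hxA
    by_cases hxv : x = v
    · subst hxv
      simp [hTdef, hKdef]
    · rcases hnbu x hxA hxv with hc | hc
      · constructor
        · rintro (hx | rfl)
          · exact absurd ((hc.trans hlt).trans hx.2) (lt_irrefl _)
          · exact absurd rfl hxv
        · intro hK
          exact absurd ⟨⟨hxA, hc.trans hlt⟩, hxv⟩ hK
      · constructor
        · rintro _ ⟨⟨_, hlow⟩, _⟩
          exact absurd (hc.trans hlow) (lt_irrefl _)
        · intro _
          exact Or.inl ⟨hxA, hc⟩
  set S : Set (Fin (n'+3)) := {z | ((e.symm z : ↥(G.neighborSet u)) : V) ∈ K} with hSdef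
  have hSconn : ((cycleGraph (n'+3)).induce S).Connected :=
    (induceInduceIso G (cycleGraph (n'+3)) _ K hKA e).connected_iff.mp hKconn
  have hScomp : Sᶜ = {z | ((e.symm z : ↥(G.neighborSet u)) : V) ∈ T} := by
    ext z
    simp only [Set.mem_compl_iff, hSdef, Set.mem_setOf_eq]
    exact (hcompl _ (e.symm z).2).symm
  have hSc : Sᶜ.Nonempty := by
    refine ⟨e ⟨v, huv⟩, ?_⟩
    simp only [Set.mem_compl_iff, hSdef, Set.mem_setOf_eq, RelIso.symm_apply_apply]
    intro hK
    exact hK.2 rfl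
  have hconn6 : (G.induce T).Connected := by
    refine (induceInduceIso G (cycleGraph (n'+3)) _ T hTA e).connected_iff.mpr ?_
    have := cycle_compl_connected S hSconn hSc
    rwa [hScomp] at this
  -- conjuncts 8, 9 : the new upper link of v
  obtain ⟨M, hM3, ⟨e'⟩⟩ := hcycv
  obtain ⟨m', rfl⟩ : ∃ m', M = m' + 3 := ⟨M - 3, by omega⟩
  have huA : u ∈ G.neighborSet v := huv.symm
  have hMcard : Nat.card ↥(G.neighborSet v) = m' + 3 := by
    rw [Nat.card_congr e'.toEquiv, Nat.card_eq_fintype_card, Fintype.card_fin]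
  have hnontriv : Nontrivial ↥(G.neighborSet v) := by
    have hfin : Finite ↥(G.neighborSet v) := Subtype.finite
    rw [← Finite.one_lt_card_iff_nontrivial, hMcard]; omega
  obtain ⟨y, hy⟩ := exists_ne (⟨u, huA⟩ : ↥(G.neighborSet v))
  have hyu : (y : V) ≠ u := fun hh => hy (Subtype.ext hh)
  set S' : Set (Fin (m'+3)) := {z | ((e'.symm z : ↥(G.neighborSet v)) : V) ∈ ({u} : Set V)}
    with hS'def
  have hS'conn : ((cycleGraph (m'+3)).induce S').Connected := by
    refine (induceInduceIso G (cycleGraph (m'+3)) _ ({u} : Set V)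
      (by simpa using huA) e').connected_iff.mp ?_
    refine induce_connected_of_subsingleton G _ ⟨u, rfl⟩ ?_
    rintro a rfl b rfl
    rfl
  have hS'comp : S'ᶜ = {z | ((e'.symm z : ↥(G.neighborSet v)) : V) ∈ G.neighborSet v \ {u}} := by
    ext z
    simp only [Set.mem_compl_iff, hS'def, Set.mem_setOf_eq, Set.mem_diff,
      Set.mem_singleton_iff]
    have := (e'.symm z).2
    tauto
  have hS'c : S'ᶜ.Nonempty := by
    refine ⟨e' y, ?_⟩
    simp only [Set.mem_compl_iff, hS'def, Set.mem_setOf_eq, RelIso.symm_apply_apply,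
      Set.mem_singleton_iff]
    exact hyu
  have hconn9 : (G.induce (G.neighborSet v \ {u})).Connected := by
    refine (induceInduceIso G (cycleGraph (m'+3)) _ (G.neighborSet v \ {u})
      Set.diff_subset e').connected_iff.mpr ?_
    have := cycle_compl_connected S' hS'conn hS'c
    rwa [hS'comp] at this
  refine ⟨eq1, ?_, ?_, eq4, ?_, ?_, eq7, ?_, ?_⟩
  · rw [eq1]; exact hKne
  · rw [eq1]; exact hKconn
  · rw [eq4]; exact ⟨v, Or.inr rfl⟩
  · rw [eq4]; exact hconn6
  · rw [eq8]; exact ⟨y, y.2, hyu⟩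
  · rw [eq8]; exact hconn9
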